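/- Let Y be a local martingale deflator and H a self-financing investment-consumption strategy over a finite horizon T with H_{T+1} = 0 and initial wealth X_0 = H_1 · P_0. Then the expected deflated total consumption satisfies E[Σ_{s=0}^{T} C_s Y_s] = X_0 Y_0, where C_t = (H_t − H_{t+1}) · P_t and C_T = H_T · P_T. -/

import Mathlib

open MeasureTheory Filter

noncomputable section

/-- Euclidean dot product on `Fin n → ℝ`. -/
def dotp {n : ℕ} (a b : Fin n → ℝ) : ℝ := ∑ i, a i * b i

/-- A discrete-time local martingale: there is a localizing sequence of stopping
times tending to infinity such that each stopped process is a true martingale. -/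
def IsLocalMartingale {Ω : Type*} {m : MeasurableSpace Ω} {E : Type*}
    [NormedAddCommGroup E] [NormedSpace ℝ E] [CompleteSpace E]
    (ℱ : MeasureTheory.Filtration ℕ m) (μ : Measure Ω) (M : ℕ → Ω → E) : Prop :=
  ∃ τ : ℕ → Ω → ℕ, (∀ N, IsStoppingTime ℱ (fun ω => (τ N ω : WithTop ℕ))) ∧
    (∀ ω, Tendsto (fun N => τ N ω) atTop atTop) ∧
    ∀ N, Martingale (MeasureTheory.stoppedProcess M (fun ω => (τ N ω : WithTop ℕ))) ℱ μ

lemma dotp_sub_left {n : ℕ} (a b c : Fin n → ℝ) : dotp (a - b) c = dotp a c - dotp b c := by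
  simp [dotp, sub_mul, Finset.sum_sub_distrib]

lemma dotp_sub_right {n : ℕ} (a b c : Fin n → ℝ) : dotp a (b - c) = dotp a b - dotp a c := by
  simp [dotp, mul_sub, Finset.sum_sub_distrib]

lemma dotp_smul_right {n : ℕ} (a : Fin n → ℝ) (r : ℝ) (b : Fin n → ℝ) :
    dotp a (r • b) = r * dotp a b := by
  simp only [dotp, Pi.smul_apply, smul_eq_mul, Finset.mul_sum]
  exact Finset.sum_congr rfl fun i _ => by ring

lemma dotp_zero_left {n : ℕ} (b : Fin n → ℝ) : dotp (0 : Fin n → ℝ) b = 0 := by simp [dotp]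

/-- Lemma A: bounded `m'`-measurable times integrable with zero set-integrals. -/
lemma auxA {Ω : Type*} {m' : MeasurableSpace Ω} {m : MeasurableSpace Ω} (hm : m' ≤ m)
    (μ : Measure Ω) [IsProbabilityMeasure μ] {ψ g : Ω → ℝ}
    (hψ : StronglyMeasurable[m'] ψ) {c : ℝ} (hc : ∀ ω, |ψ ω| ≤ c)
    (hg : Integrable g μ) (h0 : ∀ A : Set Ω, MeasurableSet[m'] A → ∫ ω in A, g ω ∂μ = 0) :
    Integrable (fun ω => ψ ω * g ω) μ ∧ ∫ ω, ψ ω * g ω ∂μ = 0 := by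
  haveI : SigmaFinite (μ.trim hm) := by
    haveI : IsFiniteMeasure (μ.trim hm) := isFiniteMeasure_trim hm
    infer_instance
  have hψm : AEStronglyMeasurable ψ μ := (hψ.mono hm).aestronglyMeasurable
  have hint : Integrable (fun ω => ψ ω * g ω) μ :=
    hg.bdd_mul hψm (Filter.Eventually.of_forall fun x => by simpa using hc x)
  refine ⟨hint, ?_⟩
  have hcond : (0 : Ω → ℝ) =ᵐ[μ] μ[g | m'] := by
    refine ae_eq_condExp_of_forall_setIntegral_eq hm hg ?_ ?_ ?_
    · intro s _ _; exact integrableOn_zero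
    · intro s hs _; simp [h0 s hs]
    · exact (@stronglyMeasurable_zero Ω ℝ m' _ _).aestronglyMeasurable
  calc ∫ ω, ψ ω * g ω ∂μ = ∫ ω, (μ[(fun ω => ψ ω * g ω) | m']) ω ∂μ :=
        (integral_condExp hm).symm
    _ = 0 := by
        have h1 : μ[(fun ω => ψ ω * g ω) | m'] =ᵐ[μ] fun ω => ψ ω * (μ[g | m']) ω :=
          condExp_mul_of_stronglyMeasurable_left hψ hint hg
        have h2 : (fun ω => ψ ω * (μ[g | m']) ω) =ᵐ[μ] fun _ => (0:ℝ) := by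
          filter_upwards [hcond] with ω hω
          simp [← hω]
        rw [integral_congr_ae (h1.trans h2)]
        simp

/-- Lemma B1: one direction of the lintegral equality. -/
lemma auxB1 {Ω : Type*} {m : MeasurableSpace Ω} {μ : Measure Ω} {f g d : Ω → ℝ} {S : Set Ω}
    (hS : MeasurableSet S) (hf : AEStronglyMeasurable f μ) (hg : AEStronglyMeasurable g μ)
    (hfg : ∀ ω ∈ S, g ω = f ω + d ω)
    (hd : Integrable (S.indicator d) μ) (hd0 : ∫ ω, S.indicator d ω ∂μ = 0)
    (hf0 : 0 ≤ᵐ[μ] f) (hg0 : 0 ≤ᵐ[μ] g)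
    (hfin : ∫⁻ ω in S, ENNReal.ofReal (f ω) ∂μ ≠ ⊤) :
    ∫⁻ ω in S, ENNReal.ofReal (g ω) ∂μ = ∫⁻ ω in S, ENNReal.ofReal (f ω) ∂μ := by
  have hfr : 0 ≤ᵐ[μ.restrict S] f := ae_restrict_of_ae hf0
  have hgr : 0 ≤ᵐ[μ.restrict S] g := ae_restrict_of_ae hg0
  have hfint : IntegrableOn f S μ := by
    refine ⟨hf.restrict, ?_⟩
    rw [hasFiniteIntegral_iff_ofReal hfr]
    exact lt_top_iff_ne_top.2 hfin
  have hdint : IntegrableOn d S μ := (integrable_indicator_iff hS).mp hd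
  have heq : g =ᵐ[μ.restrict S] fun ω => f ω + d ω :=
    (ae_restrict_iff' hS).mpr (Filter.Eventually.of_forall fun ω hω => hfg ω hω)
  have hgint : IntegrableOn g S μ := (hfint.add hdint).congr heq.symm
  have hdS : ∫ ω in S, d ω ∂μ = 0 := by rwa [integral_indicator hS] at hd0
  have hIg : ∫ ω in S, g ω ∂μ = ∫ ω in S, f ω ∂μ := by
    rw [integral_congr_ae heq, integral_add hfint hdint, hdS, add_zero]
  rw [← ofReal_integral_eq_lintegral_ofReal hgint hgr,
    ← ofReal_integral_eq_lintegral_ofReal hfint hfr, hIg]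

lemma auxB {Ω : Type*} {m : MeasurableSpace Ω} {μ : Measure Ω} {f g d : Ω → ℝ} {S : Set Ω}
    (hS : MeasurableSet S) (hf : AEStronglyMeasurable f μ) (hg : AEStronglyMeasurable g μ)
    (hfg : ∀ ω ∈ S, g ω = f ω + d ω)
    (hd : Integrable (S.indicator d) μ) (hd0 : ∫ ω, S.indicator d ω ∂μ = 0)
    (hf0 : 0 ≤ᵐ[μ] f) (hg0 : 0 ≤ᵐ[μ] g) :
    ∫⁻ ω in S, ENNReal.ofReal (g ω) ∂μ = ∫⁻ ω in S, ENNReal.ofReal (f ω) ∂μ := by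
  by_cases hfin : ∫⁻ ω in S, ENNReal.ofReal (f ω) ∂μ = ⊤
  · by_cases hgfin : ∫⁻ ω in S, ENNReal.ofReal (g ω) ∂μ = ⊤
    · rw [hfin, hgfin]
    · have hind : S.indicator (fun ω => -d ω) = fun ω => -(S.indicator d ω) := by
        funext ω
        by_cases h : ω ∈ S
        · simp [Set.indicator_of_mem h]
        · simp [Set.indicator_of_notMem h]
      have hd' : Integrable (S.indicator (fun ω => -d ω)) μ := by
        rw [hind]; exact hd.neg
      have hd0' : ∫ ω, S.indicator (fun ω => -d ω) ω ∂μ = 0 := by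
        rw [hind, integral_neg, hd0, neg_zero]
      have := auxB1 hS hg hf (fun ω hω => by rw [hfg ω hω]; ring) hd' hd0' hg0 hf0 hgfin
      exact this.symm
  · exact auxB1 hS hf hg hfg hd hd0 hf0 hg0 hfin

/-- If `Y` is a local martingale deflator and `H` a self-financing
investment-consumption strategy over horizon `T` with `H_{T+1} = 0` and initial
wealth `X_0 = H_1 ⬝ P_0`, then `E[∑_{s=0}^T C_s Y_s] = E[X_0 Y_0]` (here `C_0 = 0`
since `X_0 = H_1 ⬝ P_0`, and `C_T = H_T ⬝ P_T` since `H_{T+1} = 0`). -/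
theorem stmt1 {Ω : Type*} {m : MeasurableSpace Ω} (μ : Measure Ω) [IsProbabilityMeasure μ]
    (ℱ : MeasureTheory.Filtration ℕ m) {n : ℕ}
    (P : ℕ → Ω → Fin n → ℝ) (Y : ℕ → Ω → ℝ) (H : ℕ → Ω → Fin n → ℝ)
    (T : ℕ) (hT : 0 < T)
    (hP : Adapted ℱ P) (hY : Adapted ℱ Y)
    (hYpos : ∀ t, ∀ᵐ ω ∂μ, 0 < Y t ω)
    (hPY : IsLocalMartingale ℱ μ (fun t ω => Y t ω • P t ω))
    (hHpred : ∀ t, StronglyMeasurable[ℱ t] (H (t + 1)))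
    (hSF : ∀ t, 1 ≤ t → t ≤ T →
      ∀ᵐ ω ∂μ, 0 ≤ dotp (H t ω - H (t + 1) ω) (P t ω))
    (hHT : ∀ ω, H (T + 1) ω = 0) :
    ∫ ω, (∑ s ∈ Finset.Icc 1 T, dotp (H s ω - H (s + 1) ω) (P s ω) * Y s ω) ∂μ
      = ∫ ω, dotp (H 1 ω) (P 0 ω) * Y 0 ω ∂μ := by
  classical
  obtain ⟨τ, hτstop, hτtend, hτmart⟩ := hPY
  set M : ℕ → Ω → Fin n → ℝ := fun t ω => Y t ω • P t ω with hM
  set N : ℕ → Ω → ℝ := fun t ω =>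
    (∑ s ∈ Finset.Icc 1 t, dotp (H s ω - H (s + 1) ω) (P s ω) * Y s ω)
      + dotp (H (t + 1) ω) (M t ω) with hNdef
  -- pointwise increment identity
  have hNstep : ∀ t ω, N (t + 1) ω = N t ω + dotp (H (t + 1) ω) (M (t + 1) ω - M t ω) := by
    intro t ω
    have hsum : ∑ s ∈ Finset.Icc 1 (t + 1), dotp (H s ω - H (s + 1) ω) (P s ω) * Y s ω
        = (∑ s ∈ Finset.Icc 1 t, dotp (H s ω - H (s + 1) ω) (P s ω) * Y s ω)
          + dotp (H (t + 1) ω - H (t + 2) ω) (P (t + 1) ω) * Y (t + 1) ω :=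
      Finset.sum_Icc_succ_top (by omega) _
    have e1 : dotp (H (t + 1) ω - H (t + 2) ω) (P (t + 1) ω) * Y (t + 1) ω
        = dotp (H (t + 1) ω) (M (t + 1) ω) - dotp (H (t + 2) ω) (M (t + 1) ω) := by
      simp only [hM, dotp_sub_left, dotp_smul_right]
      ring
    have e2 : dotp (H (t + 1) ω) (M (t + 1) ω - M t ω)
        = dotp (H (t + 1) ω) (M (t + 1) ω) - dotp (H (t + 1) ω) (M t ω) :=
      dotp_sub_right _ _ _
    simp only [hNdef, hsum, e1, e2]
    ring
  -- measurability
  have hHsm : ∀ s t : ℕ, 1 ≤ s → s ≤ t + 1 → StronglyMeasurable[ℱ t] (H s) := by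
    intro s t h1 h2
    obtain ⟨u, rfl⟩ : ∃ u, s = u + 1 := ⟨s - 1, by omega⟩
    exact (hHpred u).mono (ℱ.mono (by omega))
  have hdotm : ∀ (t : ℕ) (f g : Ω → Fin n → ℝ), StronglyMeasurable[ℱ t] f →
      StronglyMeasurable[ℱ t] g →
      StronglyMeasurable[ℱ t] (fun ω => dotp (f ω) (g ω)) := by
    intro t f g hf hg
    simp only [dotp]
    refine Finset.stronglyMeasurable_fun_sum _ fun i _ => ?_
    exact ((continuous_apply i).comp_stronglyMeasurable hf).mul
      ((continuous_apply i).comp_stronglyMeasurable hg)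
  have hMsm : ∀ t, StronglyMeasurable[ℱ t] (M t) := fun t => ((hY t).smul (hP t)).stronglyMeasurable
  have hNm : ∀ t, StronglyMeasurable[ℱ t] (N t) := by
    intro t
    refine StronglyMeasurable.add ?_ (hdotm t _ _ (hHpred t) (hMsm t))
    refine Finset.stronglyMeasurable_fun_sum _ fun s hs => ?_
    simp only [Finset.mem_Icc] at hs
    exact (hdotm t _ _
      ((hHsm s t hs.1 (by omega)).sub (hHsm (s + 1) t (by omega) (by omega)))
      ((hP s).stronglyMeasurable.mono (ℱ.mono hs.2))).mul ((hY s).stronglyMeasurable.mono (ℱ.mono hs.2))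
  -- the covering sets
  set A : ℕ → ℕ → Set Ω := fun t k => {ω | (∀ i, |H (t + 1) ω i| ≤ (k : ℝ)) ∧ t + 1 ≤ τ k ω}
    with hA
  have hAm : ∀ t k, MeasurableSet[ℱ t] (A t k) := by
    intro t k
    have : A t k = (⋂ i, {ω | |H (t + 1) ω i| ≤ (k : ℝ)}) ∩ {ω | τ k ω ≤ t}ᶜ := by
      ext ω
      simp only [hA, Set.mem_setOf_eq, Set.mem_inter_iff, Set.mem_iInter, Set.mem_compl_iff,
        not_le]
      exact and_congr Iff.rfl (by omega)
    rw [this]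
    have h1 : MeasurableSet[ℱ t] (⋂ i, {ω | |H (t + 1) ω i| ≤ (k : ℝ)}) := by
      refine MeasurableSet.iInter fun i => ?_
      have hm1 : StronglyMeasurable[ℱ t] fun ω => |H (t + 1) ω i| :=
        continuous_abs.comp_stronglyMeasurable
          ((continuous_apply i).comp_stronglyMeasurable (hHpred t))
      exact hm1.measurableSet_le stronglyMeasurable_const
    exact h1.inter (by have h := (hτstop k t).compl; simpa using h)
  have hAcover : ∀ t ω, ∃ k, ω ∈ A t k := by
    intro t ω
    obtain ⟨c, hc⟩ := exists_nat_ge (∑ j, |H (t + 1) ω j|)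
    have hci : ∀ i, |H (t + 1) ω i| ≤ (c : ℝ) := fun i =>
      le_trans (Finset.single_le_sum (f := fun j => |H (t + 1) ω j|)
        (fun j _ => abs_nonneg _) (Finset.mem_univ i)) hc
    have h1 : ∀ᶠ k in atTop, t + 1 ≤ τ k ω := (hτtend ω).eventually_ge_atTop (t + 1)
    obtain ⟨k, hk1, hk2⟩ := (h1.and (eventually_ge_atTop c)).exists
    exact ⟨k, fun i => le_trans (hci i) (by exact_mod_cast hk2), hk1⟩
  -- key zero-integral lemma
  have hkey : ∀ (t k : ℕ) (G : Set Ω), MeasurableSet[ℱ t] G → G ⊆ A t k →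
      Integrable (G.indicator (fun ω => dotp (H (t + 1) ω) (M (t + 1) ω - M t ω))) μ ∧
      ∫ ω, G.indicator (fun ω => dotp (H (t + 1) ω) (M (t + 1) ω - M t ω)) ω ∂μ = 0 := by
    intro t k G hG hsub
    have hmart := hτmart k
    set Mk := MeasureTheory.stoppedProcess M (fun ω => (τ k ω : WithTop ℕ)) with hMk
    have hpt : ∀ ω, G.indicator (fun ω => dotp (H (t + 1) ω) (M (t + 1) ω - M t ω)) ω
        = ∑ i, (G.indicator (fun ω => H (t + 1) ω i) ω) * (Mk (t + 1) ω i - Mk t ω i) := by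
      intro ω
      by_cases h : ω ∈ G
      · have hτω : t + 1 ≤ τ k ω := (hsub h).2
        have e1 : Mk (t + 1) ω = M (t + 1) ω := by
          simp only [hMk, MeasureTheory.stoppedProcess]
          rw [min_eq_left (by exact WithTop.coe_le_coe.mpr hτω)]; rfl
        have e2 : Mk t ω = M t ω := by
          simp only [hMk, MeasureTheory.stoppedProcess]
          rw [min_eq_left (by exact WithTop.coe_le_coe.mpr (le_trans (Nat.le_succ t) hτω))]; rfl
        simp only [Set.indicator_of_mem h, e1, e2, dotp, Pi.sub_apply]
      · simp [Set.indicator_of_notMem h]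
    have hterm : ∀ i : Fin n,
        Integrable (fun ω => (G.indicator (fun ω => H (t + 1) ω i) ω)
          * (Mk (t + 1) ω i - Mk t ω i)) μ ∧
        ∫ ω, (G.indicator (fun ω => H (t + 1) ω i) ω) * (Mk (t + 1) ω i - Mk t ω i) ∂μ = 0 := by
      intro i
      set L : (Fin n → ℝ) →L[ℝ] ℝ := ContinuousLinearMap.proj i with hL
      have hint1 : Integrable (fun ω => Mk (t + 1) ω i) μ :=
        L.integrable_comp (hmart.integrable (t + 1))
      have hint2 : Integrable (fun ω => Mk t ω i) μ := L.integrable_comp (hmart.integrable t)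
      have hgint : Integrable (fun ω => Mk (t + 1) ω i - Mk t ω i) μ := hint1.sub hint2
      have hset : ∀ B : Set Ω, MeasurableSet[ℱ t] B →
          ∫ ω in B, (Mk (t + 1) ω i - Mk t ω i) ∂μ = 0 := by
        intro B hB
        have hveq : ∫ ω in B, Mk t ω ∂μ = ∫ ω in B, Mk (t + 1) ω ∂μ :=
          hmart.setIntegral_eq (Nat.le_succ t) hB
        have h1 : ∫ ω in B, Mk (t + 1) ω i ∂μ = L (∫ ω in B, Mk (t + 1) ω ∂μ) :=
          L.integral_comp_comm (hmart.integrable (t + 1)).integrableOn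
        have h2 : ∫ ω in B, Mk t ω i ∂μ = L (∫ ω in B, Mk t ω ∂μ) :=
          L.integral_comp_comm (hmart.integrable t).integrableOn
        rw [integral_sub hint1.integrableOn hint2.integrableOn, h1, h2, hveq, sub_self]
      have hψm : StronglyMeasurable[ℱ t] (G.indicator (fun ω => H (t + 1) ω i)) :=
        (((continuous_apply i).comp_stronglyMeasurable (hHpred t))).indicator hG
      have hψb : ∀ ω, |G.indicator (fun ω => H (t + 1) ω i) ω| ≤ (k : ℝ) := by
        intro ω
        by_cases h : ω ∈ G
        · rw [Set.indicator_of_mem h]; exact (hsub h).1 i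
        · rw [Set.indicator_of_notMem h]; simp
      exact auxA (ℱ.le t) μ hψm hψb hgint hset
    have hfun : G.indicator (fun ω => dotp (H (t + 1) ω) (M (t + 1) ω - M t ω))
        = fun ω => ∑ i, (G.indicator (fun ω => H (t + 1) ω i) ω)
          * (Mk (t + 1) ω i - Mk t ω i) := funext hpt
    constructor
    · rw [hfun]
      exact integrable_finset_sum _ fun i _ => (hterm i).1
    · rw [hfun, integral_finset_sum _ fun i _ => (hterm i).1]
      exact Finset.sum_eq_zero fun i _ => (hterm i).2
  -- nonnegativity of N T
  have hNT0 : 0 ≤ᵐ[μ] N T := by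
    have hall : ∀ᵐ ω ∂μ, ∀ s ∈ Finset.Icc 1 T,
        0 ≤ dotp (H s ω - H (s + 1) ω) (P s ω) ∧ 0 < Y s ω := by
      rw [eventually_all_finset]
      intro s hs
      simp only [Finset.mem_Icc] at hs
      exact (hSF s hs.1 hs.2).and (hYpos s)
    filter_upwards [hall] with ω hω
    have hzero : dotp (H (T + 1) ω) (M T ω) = 0 := by rw [hHT ω, dotp_zero_left]
    simp only [hNdef, Pi.zero_apply]
    rw [hzero, add_zero]
    exact Finset.sum_nonneg fun s hs => mul_nonneg (hω s hs).1 (le_of_lt (hω s hs).2)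
  -- nonnegativity at all times, by downward induction
  have hNonneg : ∀ t, t ≤ T → 0 ≤ᵐ[μ] N t := by
    suffices h : ∀ d t, t + d = T → 0 ≤ᵐ[μ] N t by
      intro t ht; exact h (T - t) t (by omega)
    intro d
    induction d with
    | zero =>
      intro t ht
      have : t = T := by omega
      rw [this]; exact hNT0
    | succ d ih =>
      intro t ht
      have hN1 := ih (t + 1) (by omega)
      have hBm : MeasurableSet[ℱ t] {ω | N t ω < 0} :=
        (hNm t).measurableSet_lt stronglyMeasurable_const
      have hnull : ∀ k : ℕ, ∀ᵐ ω ∂μ, ω ∉ {ω | N t ω < 0} ∩ A t k := by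
        intro k
        have hkey' := hkey t k ({ω | N t ω < 0} ∩ A t k) (hBm.inter (hAm t k))
          Set.inter_subset_right
        have hnn : 0 ≤ᵐ[μ] ({ω | N t ω < 0} ∩ A t k).indicator
            (fun ω => dotp (H (t + 1) ω) (M (t + 1) ω - M t ω)) := by
          filter_upwards [hN1] with ω hω
          simp only [Pi.zero_apply] at hω ⊢
          by_cases h : ω ∈ {ω | N t ω < 0} ∩ A t k
          · rw [Set.indicator_of_mem h]
            have hd : dotp (H (t + 1) ω) (M (t + 1) ω - M t ω) = N (t + 1) ω - N t ω := by
              rw [hNstep t ω]; ring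
            rw [hd]
            have hb : N t ω < 0 := h.1
            have : (0 : ℝ) ≤ N (t + 1) ω := hω
            linarith
          · rw [Set.indicator_of_notMem h]
        have hzero := (integral_eq_zero_iff_of_nonneg_ae hnn hkey'.1).mp hkey'.2
        filter_upwards [hzero, hN1] with ω h0 h1
        intro hmem
        have hval : dotp (H (t + 1) ω) (M (t + 1) ω - M t ω) = 0 := by
          have := Set.indicator_of_mem hmem
            (fun ω => dotp (H (t + 1) ω) (M (t + 1) ω - M t ω))
          rw [← this]
          exact h0
        have hd : N (t + 1) ω = N t ω := by
          have := hNstep t ω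
          rw [hval, add_zero] at this
          exact this
        have hb : N t ω < 0 := hmem.1
        rw [← hd] at hb
        exact absurd h1 (not_le.mpr hb)
      have hae : ∀ᵐ ω ∂μ, ∀ k : ℕ, ω ∉ {ω | N t ω < 0} ∩ A t k := ae_all_iff.2 hnull
      filter_upwards [hae] with ω hω
      by_contra hlt
      push_neg at hlt
      obtain ⟨k, hk⟩ := hAcover t ω
      exact hω k ⟨hlt, hk⟩
  -- constancy of the lower integral
  have hNsm : ∀ t, AEStronglyMeasurable (N t) μ :=
    fun t => ((hNm t).mono (ℱ.le t)).aestronglyMeasurable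
  have hlin : ∀ t, t < T →
      ∫⁻ ω, ENNReal.ofReal (N t ω) ∂μ = ∫⁻ ω, ENNReal.ofReal (N (t + 1) ω) ∂μ := by
    intro t ht
    set G : ℕ → Set Ω := disjointed (A t) with hG
    have hGm' : ∀ k, MeasurableSet[ℱ t] (G k) := MeasurableSet.disjointed (hAm t)
    have hGm : ∀ k, MeasurableSet (G k) := fun k => ℱ.le t _ (hGm' k)
    have hGd : Pairwise (Function.onFun Disjoint G) := disjoint_disjointed _
    have hGu : ⋃ k, G k = Set.univ := by
      rw [hG, iUnion_disjointed]
      exact Set.eq_univ_of_forall fun ω => Set.mem_iUnion.2 (hAcover t ω)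
    have main : ∀ k, ∫⁻ ω in G k, ENNReal.ofReal (N (t + 1) ω) ∂μ
        = ∫⁻ ω in G k, ENNReal.ofReal (N t ω) ∂μ := by
      intro k
      have hsub : G k ⊆ A t k := disjointed_subset _ _
      have hkey' := hkey t k (G k) (hGm' k) hsub
      exact auxB (hGm k) (hNsm t) (hNsm (t + 1)) (fun ω _ => hNstep t ω)
        hkey'.1 hkey'.2 (hNonneg t ht.le) (hNonneg (t + 1) ht)
    have e1 : ∫⁻ ω, ENNReal.ofReal (N t ω) ∂μ
        = ∑' k, ∫⁻ ω in G k, ENNReal.ofReal (N t ω) ∂μ := by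
      rw [← setLIntegral_univ, ← hGu, lintegral_iUnion hGm hGd]
    have e2 : ∫⁻ ω, ENNReal.ofReal (N (t + 1) ω) ∂μ
        = ∑' k, ∫⁻ ω in G k, ENNReal.ofReal (N (t + 1) ω) ∂μ := by
      rw [← setLIntegral_univ, ← hGu, lintegral_iUnion hGm hGd]
    rw [e1, e2]
    exact (tsum_congr fun k => (main k)).symm
  have hchain : ∀ t, t ≤ T →
      ∫⁻ ω, ENNReal.ofReal (N 0 ω) ∂μ = ∫⁻ ω, ENNReal.ofReal (N t ω) ∂μ := by
    intro t
    induction t with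
    | zero => intro _; rfl
    | succ t ih => intro h; rw [ih (by omega), hlin t (by omega)]
  -- conclusion
  have hNTeq : (fun ω => ∑ s ∈ Finset.Icc 1 T, dotp (H s ω - H (s + 1) ω) (P s ω) * Y s ω)
      = N T := by
    funext ω
    simp only [hNdef]
    rw [hHT ω, dotp_zero_left, add_zero]
  have hN0eq : (fun ω => dotp (H 1 ω) (P 0 ω) * Y 0 ω) = N 0 := by
    funext ω
    simp only [hNdef, hM, Finset.Icc_self, Finset.Icc_eq_empty_of_lt (by omega : (1:ℕ) > 0)]
    rw [dotp_smul_right]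
    simp [mul_comm]
  calc ∫ ω, (∑ s ∈ Finset.Icc 1 T, dotp (H s ω - H (s + 1) ω) (P s ω) * Y s ω) ∂μ
      = ∫ ω, N T ω ∂μ := by rw [hNTeq]
    _ = (∫⁻ ω, ENNReal.ofReal (N T ω) ∂μ).toReal :=
        integral_eq_lintegral_of_nonneg_ae (hNonneg T le_rfl) (hNsm T)
    _ = (∫⁻ ω, ENNReal.ofReal (N 0 ω) ∂μ).toReal := by rw [hchain T le_rfl]
    _ = ∫ ω, N 0 ω ∂μ :=
        (integral_eq_lintegral_of_nonneg_ae (hNonneg 0 (by omega)) (hNsm 0)).symm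
    _ = ∫ ω, dotp (H 1 ω) (P 0 ω) * Y 0 ω ∂μ := by rw [hN0eq]
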